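/- Let φ = a₁·e^{123} + a₂·(e^{126}−e^{135}+e^{234}) + a₃·(e^{156}−e^{246}+e^{345}) + a₄·(e^{147}+e^{257}+e^{367}) + a₅·e^{456} for real numbers a₁,…,a₅. Then (ι_{e₇}φ) ∧ (ι_{e₇}φ) ∧ φ = −6·a₄³ · e^{1234567}. In particular, if a₄ = 0 then φ is not definite. -/

import Mathlib

open AlternatingMap
open Fin.NatCast

/-- `ℝ⁷`. -/
abbrev V7 : Type := Fin 7 → ℝ

/-- Wedge product of real-valued alternating forms on `V7`. -/
noncomputable def wedge {m n : ℕ} (φ : V7 [⋀^Fin m]→ₗ[ℝ] ℝ) (ψ : V7 [⋀^Fin n]→ₗ[ℝ] ℝ) :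
    V7 [⋀^Fin (m + n)]→ₗ[ℝ] ℝ :=
  ((TensorProduct.lid ℝ ℝ).toLinearMap.compAlternatingMap (φ.domCoprod ψ)).domDomCongr
    finSumFinEquiv

/-- The dual basis covector `eⁱ` (1-indexed: `i = 1, …, 7`) as a 1-form on `ℝ⁷`. -/
noncomputable def eF (i : ℕ) : V7 [⋀^Fin 1]→ₗ[ℝ] ℝ :=
  AlternatingMap.ofSubsingleton ℝ V7 ℝ (0 : Fin 1) (LinearMap.proj ((i - 1 : ℕ) : Fin 7))

/-- `e^{ij} := eⁱ ∧ eʲ` (1-indexed). -/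
noncomputable def eW2 (i j : ℕ) : V7 [⋀^Fin 2]→ₗ[ℝ] ℝ := wedge (eF i) (eF j)

/-- `e^{ijk} := eⁱ ∧ eʲ ∧ eᵏ` (1-indexed). -/
noncomputable def eW3 (i j k : ℕ) : V7 [⋀^Fin 3]→ₗ[ℝ] ℝ := wedge (wedge (eF i) (eF j)) (eF k)

/-- The volume form `e^{1234567} = e¹∧e²∧e³∧e⁴∧e⁵∧e⁶∧e⁷`. -/
noncomputable def vol7 : V7 [⋀^Fin 7]→ₗ[ℝ] ℝ :=
  wedge (wedge (wedge (wedge (wedge (wedge (eF 1) (eF 2)) (eF 3)) (eF 4)) (eF 5)) (eF 6)) (eF 7)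

/-- The standard basis vector `eᵢ` of `ℝ⁷` (1-indexed: `i = 1, …, 7`). -/
noncomputable def bV (i : ℕ) : V7 := Pi.single ((i - 1 : ℕ) : Fin 7) 1

/-- Interior product `ι_v φ` of a vector with a 3-form: `(x, y) ↦ φ (v, x, y)`. -/
noncomputable def iprod (v : V7) (φ : V7 [⋀^Fin 3]→ₗ[ℝ] ℝ) : V7 [⋀^Fin 2]→ₗ[ℝ] ℝ :=
  φ.curryLeft v

/-- The 7-form `(ι_v φ) ∧ (ι_v φ) ∧ φ`. -/
noncomputable def G2vol (v : V7) (φ : V7 [⋀^Fin 3]→ₗ[ℝ] ℝ) : V7 [⋀^Fin 7]→ₗ[ℝ] ℝ :=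
  wedge (wedge (iprod v φ) (iprod v φ)) φ

/-- A 3-form on `ℝ⁷` is definite if `(ι_vφ)∧(ι_vφ)∧φ ≠ 0` for every nonzero `v`. -/
def IsDefinite (φ : V7 [⋀^Fin 3]→ₗ[ℝ] ℝ) : Prop :=
  ∀ v : V7, v ≠ 0 → G2vol v φ ≠ 0

section Aux

open Equiv

noncomputable def mf {k : ℕ} (g : Fin k → Fin 7) : MultilinearMap ℝ (fun _ : Fin k => V7) ℝ :=
  (MultilinearMap.mkPiAlgebra ℝ (Fin k) ℝ).compLinearMap (fun i => LinearMap.proj (g i))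

lemma mf_apply {k : ℕ} (g : Fin k → Fin 7) (v : Fin k → V7) : mf g v = ∏ i, v i (g i) := rfl

noncomputable def af {k : ℕ} (g : Fin k → Fin 7) : V7 [⋀^Fin k]→ₗ[ℝ] ℝ :=
  MultilinearMap.alternatization (mf g)

lemma af_apply {k : ℕ} (g : Fin k → Fin 7) (v : Fin k → V7) :
    af g v = Matrix.det (Matrix.of fun p q => v p (g q)) := by
  rw [af, MultilinearMap.alternatization_apply, Matrix.det_apply']
  refine Finset.sum_congr rfl fun σ _ => ?_
  simp [mf, Units.smul_def, zsmul_eq_mul]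

lemma af_dup {k : ℕ} (g : Fin k → Fin 7) (i j : Fin k) (hne : i ≠ j) (h : g i = g j) :
    af g = 0 := by
  ext v
  rw [af_apply]
  exact Matrix.det_zero_of_column_eq hne fun p => by simp [h]

lemma af_comp_perm {k : ℕ} (g : Fin k → Fin 7) (σ : Equiv.Perm (Fin k)) :
    af (g ∘ σ) = ((Equiv.Perm.sign σ : ℤ) : ℝ) • af g := by
  ext v
  rw [AlternatingMap.smul_apply, af_apply, af_apply, smul_eq_mul]
  exact Matrix.det_permute' σ (Matrix.of fun p q => v p (g q))

lemma alt_domDomCongr {ι ι' : Type*} [Fintype ι] [DecidableEq ι] [Fintype ι'] [DecidableEq ι']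
    (e : ι ≃ ι') (M : MultilinearMap ℝ (fun _ : ι => V7) ℝ) :
    (MultilinearMap.alternatization M).domDomCongr e
      = MultilinearMap.alternatization (M.domDomCongr e) := by
  ext v
  rw [AlternatingMap.domDomCongr_apply, MultilinearMap.alternatization_apply,
    MultilinearMap.alternatization_apply]
  refine Fintype.sum_equiv (e.permCongr) _ _ fun σ => ?_
  rw [Equiv.Perm.sign_permCongr]
  simp only [MultilinearMap.domDomCongr_apply]
  exact congrArg (fun x => Equiv.Perm.sign σ • x)
    (congrArg M (funext fun i => by simp [Equiv.permCongr_apply]))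

lemma wedge_af {m n : ℕ} (g : Fin m → Fin 7) (h : Fin n → Fin 7) :
    wedge (af g) (af h) = af (Fin.append g h) := by
  rw [wedge, af, af, af, ← MultilinearMap.domCoprod_alternization,
    ← LinearMap.compMultilinearMap_alternatization, alt_domDomCongr]
  congr 1
  refine MultilinearMap.ext fun v => ?_
  simp only [MultilinearMap.domDomCongr_apply, LinearMap.compMultilinearMap_apply,
    MultilinearMap.domCoprod_apply, mf_apply, LinearEquiv.coe_coe, TensorProduct.lid_tmul,
    smul_eq_mul]
  rw [Fin.prod_univ_add]
  congr 1
  · exact Finset.prod_congr rfl fun i _ => by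
      rw [finSumFinEquiv_apply_left, Fin.append_left]
  · exact Finset.prod_congr rfl fun i _ => by
      rw [finSumFinEquiv_apply_right, Fin.append_right]

lemma eF_af (i : ℕ) : eF i = af (fun _ : Fin 1 => ((i - 1 : ℕ) : Fin 7)) := by
  ext v
  simp [eF, af_apply, Matrix.det_fin_one]

lemma wedge_add_left {m n : ℕ} (φ₁ φ₂ : V7 [⋀^Fin m]→ₗ[ℝ] ℝ) (ψ : V7 [⋀^Fin n]→ₗ[ℝ] ℝ) :
    wedge (φ₁ + φ₂) ψ = wedge φ₁ ψ + wedge φ₂ ψ := by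
  unfold wedge
  rw [← AlternatingMap.domCoprod'_apply, ← AlternatingMap.domCoprod'_apply,
    ← AlternatingMap.domCoprod'_apply, TensorProduct.add_tmul, map_add,
    LinearMap.compAlternatingMap_add, AlternatingMap.domDomCongr_add]

lemma wedge_add_right {m n : ℕ} (φ : V7 [⋀^Fin m]→ₗ[ℝ] ℝ) (ψ₁ ψ₂ : V7 [⋀^Fin n]→ₗ[ℝ] ℝ) :
    wedge φ (ψ₁ + ψ₂) = wedge φ ψ₁ + wedge φ ψ₂ := by
  unfold wedge
  rw [← AlternatingMap.domCoprod'_apply, ← AlternatingMap.domCoprod'_apply,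
    ← AlternatingMap.domCoprod'_apply, TensorProduct.tmul_add, map_add,
    LinearMap.compAlternatingMap_add, AlternatingMap.domDomCongr_add]

lemma wedge_smul_left {m n : ℕ} (r : ℝ) (φ : V7 [⋀^Fin m]→ₗ[ℝ] ℝ) (ψ : V7 [⋀^Fin n]→ₗ[ℝ] ℝ) :
    wedge (r • φ) ψ = r • wedge φ ψ := by
  unfold wedge
  rw [← AlternatingMap.domCoprod'_apply, ← AlternatingMap.domCoprod'_apply,
    ← TensorProduct.smul_tmul', map_smul, LinearMap.compAlternatingMap_smul,
    AlternatingMap.domDomCongr_smul]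

lemma wedge_smul_right {m n : ℕ} (r : ℝ) (φ : V7 [⋀^Fin m]→ₗ[ℝ] ℝ) (ψ : V7 [⋀^Fin n]→ₗ[ℝ] ℝ) :
    wedge φ (r • ψ) = r • wedge φ ψ := by
  unfold wedge
  rw [← AlternatingMap.domCoprod'_apply, ← AlternatingMap.domCoprod'_apply,
    TensorProduct.tmul_smul, map_smul, LinearMap.compAlternatingMap_smul,
    AlternatingMap.domDomCongr_smul]

lemma wedge_sub_left {m n : ℕ} (φ₁ φ₂ : V7 [⋀^Fin m]→ₗ[ℝ] ℝ) (ψ : V7 [⋀^Fin n]→ₗ[ℝ] ℝ) :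
    wedge (φ₁ - φ₂) ψ = wedge φ₁ ψ - wedge φ₂ ψ := by
  have h : φ₁ - φ₂ = φ₁ + (-1 : ℝ) • φ₂ := by module
  rw [h, wedge_add_left, wedge_smul_left]; module

lemma wedge_sub_right {m n : ℕ} (φ : V7 [⋀^Fin m]→ₗ[ℝ] ℝ) (ψ₁ ψ₂ : V7 [⋀^Fin n]→ₗ[ℝ] ℝ) :
    wedge φ (ψ₁ - ψ₂) = wedge φ ψ₁ - wedge φ ψ₂ := by
  have h : ψ₁ - ψ₂ = ψ₁ + (-1 : ℝ) • ψ₂ := by module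
  rw [h, wedge_add_right, wedge_smul_right]; module

lemma wedge_zero_left {m n : ℕ} (ψ : V7 [⋀^Fin n]→ₗ[ℝ] ℝ) :
    wedge (0 : V7 [⋀^Fin m]→ₗ[ℝ] ℝ) ψ = 0 := by
  rw [show (0 : V7 [⋀^Fin m]→ₗ[ℝ] ℝ) = (0:ℝ) • 0 from (zero_smul ℝ _).symm,
    wedge_smul_left, zero_smul]

lemma wedge_zero_right {m n : ℕ} (φ : V7 [⋀^Fin m]→ₗ[ℝ] ℝ) :
    wedge φ (0 : V7 [⋀^Fin n]→ₗ[ℝ] ℝ) = 0 := by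
  rw [show (0 : V7 [⋀^Fin n]→ₗ[ℝ] ℝ) = (0:ℝ) • 0 from (zero_smul ℝ _).symm,
    wedge_smul_right, zero_smul]

lemma eW3_eq (i j k : ℕ) :
    eW3 i j k = af ![((i - 1 : ℕ) : Fin 7), ((j - 1 : ℕ) : Fin 7), ((k - 1 : ℕ) : Fin 7)] := by
  rw [eW3, eF_af, eF_af, eF_af, wedge_af, wedge_af]
  congr 1
  funext p; fin_cases p <;> rfl

lemma iprod_add (v : V7) (f g : V7 [⋀^Fin 3]→ₗ[ℝ] ℝ) :
    iprod v (f + g) = iprod v f + iprod v g := rfl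

lemma iprod_sub (v : V7) (f g : V7 [⋀^Fin 3]→ₗ[ℝ] ℝ) :
    iprod v (f - g) = iprod v f - iprod v g := by
  ext w
  simp [iprod]

lemma iprod_smul (v : V7) (r : ℝ) (f : V7 [⋀^Fin 3]→ₗ[ℝ] ℝ) :
    iprod v (r • f) = r • iprod v f := rfl

lemma iprod_hit (x y : Fin 7) (hx : x ≠ 6) (hy : y ≠ 6) :
    iprod (bV 7) (af ![x, y, 6]) = af ![x, y] := by
  ext w
  simp only [iprod, AlternatingMap.curryLeft_apply_apply, af_apply, bV]
  rw [Matrix.det_fin_three, Matrix.det_fin_two]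
  simp [Pi.single_apply, hx, hy, show ((7-1 : ℕ) : Fin 7) = 6 by rfl,
    Matrix.vecHead, Matrix.vecTail]

lemma iprod_miss (x y z : Fin 7) (hx : x ≠ 6) (hy : y ≠ 6) (hz : z ≠ 6) :
    iprod (bV 7) (af ![x, y, z]) = 0 := by
  ext w
  simp only [iprod, AlternatingMap.curryLeft_apply_apply, af_apply, bV]
  rw [Matrix.det_fin_three]
  simp [Pi.single_apply, hx, hy, hz, show ((7-1 : ℕ) : Fin 7) = 6 by rfl,
    Matrix.vecHead, Matrix.vecTail]

lemma app22 (a b c d : Fin 7) :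
    Fin.append ![a, b] ![c, d] = ![a, b, c, d] := by
  funext i; fin_cases i <;> rfl

lemma app43 (a b c d x y z : Fin 7) :
    Fin.append ![a, b, c, d] ![x, y, z] = ![a, b, c, d, x, y, z] := by
  funext i; fin_cases i <;> rfl

lemma vol7_eq : vol7 = af id := by
  rw [vol7, eF_af 1, eF_af 2, eF_af 3, eF_af 4, eF_af 5, eF_af 6, eF_af 7,
    wedge_af, wedge_af, wedge_af, wedge_af, wedge_af, wedge_af]
  congr 1
  funext p; fin_cases p <;> rfl

end Aux

/-- `(ι_{e₇}φ) ∧ (ι_{e₇}φ) ∧ φ = −6·a₄³ · e^{1234567}`; in particular if `a₄ = 0` then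
`φ` is not definite. -/
theorem stmt13 (a₁ a₂ a₃ a₄ a₅ : ℝ) :
    let φ : V7 [⋀^Fin 3]→ₗ[ℝ] ℝ :=
      a₁ • eW3 1 2 3 + a₂ • (eW3 1 2 6 - eW3 1 3 5 + eW3 2 3 4)
        + a₃ • (eW3 1 5 6 - eW3 2 4 6 + eW3 3 4 5)
        + a₄ • (eW3 1 4 7 + eW3 2 5 7 + eW3 3 6 7) + a₅ • eW3 4 5 6
    G2vol (bV 7) φ = (-(6 * a₄ ^ 3)) • vol7 ∧
    (a₄ = 0 → ¬ IsDefinite φ) := by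
  intro φ
  have hφ : φ = a₁ • af ![0,1,2] + a₂ • (af ![0,1,5] - af ![0,2,4] + af ![1,2,3])
      + a₃ • (af ![0,4,5] - af ![1,3,5] + af ![2,3,4])
      + a₄ • (af ![0,3,6] + af ![1,4,6] + af ![2,5,6]) + a₅ • af ![3,4,5] := by
    show a₁ • eW3 1 2 3 + a₂ • (eW3 1 2 6 - eW3 1 3 5 + eW3 2 3 4)
        + a₃ • (eW3 1 5 6 - eW3 2 4 6 + eW3 3 4 5)
        + a₄ • (eW3 1 4 7 + eW3 2 5 7 + eW3 3 6 7) + a₅ • eW3 4 5 6 = _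
    simp only [eW3_eq]
    norm_num
  have m0 : iprod (bV 7) (af ![0,1,2]) = 0 := iprod_miss _ _ _ (by decide) (by decide) (by decide)
  have m1 : iprod (bV 7) (af ![0,1,5]) = 0 := iprod_miss _ _ _ (by decide) (by decide) (by decide)
  have m2 : iprod (bV 7) (af ![0,2,4]) = 0 := iprod_miss _ _ _ (by decide) (by decide) (by decide)
  have m3 : iprod (bV 7) (af ![1,2,3]) = 0 := iprod_miss _ _ _ (by decide) (by decide) (by decide)
  have m4 : iprod (bV 7) (af ![0,4,5]) = 0 := iprod_miss _ _ _ (by decide) (by decide) (by decide)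
  have m5 : iprod (bV 7) (af ![1,3,5]) = 0 := iprod_miss _ _ _ (by decide) (by decide) (by decide)
  have m6 : iprod (bV 7) (af ![2,3,4]) = 0 := iprod_miss _ _ _ (by decide) (by decide) (by decide)
  have m7 : iprod (bV 7) (af ![3,4,5]) = 0 := iprod_miss _ _ _ (by decide) (by decide) (by decide)
  have h0 : iprod (bV 7) (af ![0,3,6]) = af ![0,3] := iprod_hit _ _ (by decide) (by decide)
  have h1 : iprod (bV 7) (af ![1,4,6]) = af ![1,4] := iprod_hit _ _ (by decide) (by decide)
  have h2 : iprod (bV 7) (af ![2,5,6]) = af ![2,5] := iprod_hit _ _ (by decide) (by decide)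
  have hψ : iprod (bV 7) φ = a₄ • (af ![0,3] + af ![1,4] + af ![2,5]) := by
    rw [hφ]
    simp only [iprod_add, iprod_sub, iprod_smul, m0, m1, m2, m3, m4, m5, m6, m7, h0, h1, h2]
    module
  have z4_0 : af (![0,3,0,3] : Fin 4 → Fin 7) = 0 := af_dup _ 0 2 (by decide) (by decide)
  have z4_1 : af (![1,4,1,4] : Fin 4 → Fin 7) = 0 := af_dup _ 0 2 (by decide) (by decide)
  have z4_2 : af (![2,5,2,5] : Fin 4 → Fin 7) = 0 := af_dup _ 0 2 (by decide) (by decide)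
  have z_0 : af (![0,3,1,4,0,1,2] : Fin 7 → Fin 7) = 0 := af_dup _ 0 4 (by decide) (by decide)
  have z_1 : af (![0,3,1,4,0,1,5] : Fin 7 → Fin 7) = 0 := af_dup _ 0 4 (by decide) (by decide)
  have z_2 : af (![0,3,1,4,0,2,4] : Fin 7 → Fin 7) = 0 := af_dup _ 0 4 (by decide) (by decide)
  have z_3 : af (![0,3,1,4,1,2,3] : Fin 7 → Fin 7) = 0 := af_dup _ 1 6 (by decide) (by decide)
  have z_4 : af (![0,3,1,4,0,4,5] : Fin 7 → Fin 7) = 0 := af_dup _ 0 4 (by decide) (by decide)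
  have z_5 : af (![0,3,1,4,1,3,5] : Fin 7 → Fin 7) = 0 := af_dup _ 1 5 (by decide) (by decide)
  have z_6 : af (![0,3,1,4,2,3,4] : Fin 7 → Fin 7) = 0 := af_dup _ 1 5 (by decide) (by decide)
  have z_7 : af (![0,3,1,4,0,3,6] : Fin 7 → Fin 7) = 0 := af_dup _ 0 4 (by decide) (by decide)
  have z_8 : af (![0,3,1,4,1,4,6] : Fin 7 → Fin 7) = 0 := af_dup _ 2 4 (by decide) (by decide)
  have z_9 : af (![0,3,1,4,3,4,5] : Fin 7 → Fin 7) = 0 := af_dup _ 1 4 (by decide) (by decide)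
  have z_10 : af (![0,3,2,5,0,1,2] : Fin 7 → Fin 7) = 0 := af_dup _ 0 4 (by decide) (by decide)
  have z_11 : af (![0,3,2,5,0,1,5] : Fin 7 → Fin 7) = 0 := af_dup _ 0 4 (by decide) (by decide)
  have z_12 : af (![0,3,2,5,0,2,4] : Fin 7 → Fin 7) = 0 := af_dup _ 0 4 (by decide) (by decide)
  have z_13 : af (![0,3,2,5,1,2,3] : Fin 7 → Fin 7) = 0 := af_dup _ 1 6 (by decide) (by decide)
  have z_14 : af (![0,3,2,5,0,4,5] : Fin 7 → Fin 7) = 0 := af_dup _ 0 4 (by decide) (by decide)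
  have z_15 : af (![0,3,2,5,1,3,5] : Fin 7 → Fin 7) = 0 := af_dup _ 1 5 (by decide) (by decide)
  have z_16 : af (![0,3,2,5,2,3,4] : Fin 7 → Fin 7) = 0 := af_dup _ 1 5 (by decide) (by decide)
  have z_17 : af (![0,3,2,5,0,3,6] : Fin 7 → Fin 7) = 0 := af_dup _ 0 4 (by decide) (by decide)
  have z_18 : af (![0,3,2,5,2,5,6] : Fin 7 → Fin 7) = 0 := af_dup _ 2 4 (by decide) (by decide)
  have z_19 : af (![0,3,2,5,3,4,5] : Fin 7 → Fin 7) = 0 := af_dup _ 1 4 (by decide) (by decide)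
  have z_20 : af (![1,4,0,3,0,1,2] : Fin 7 → Fin 7) = 0 := af_dup _ 0 5 (by decide) (by decide)
  have z_21 : af (![1,4,0,3,0,1,5] : Fin 7 → Fin 7) = 0 := af_dup _ 0 5 (by decide) (by decide)
  have z_22 : af (![1,4,0,3,0,2,4] : Fin 7 → Fin 7) = 0 := af_dup _ 1 6 (by decide) (by decide)
  have z_23 : af (![1,4,0,3,1,2,3] : Fin 7 → Fin 7) = 0 := af_dup _ 0 4 (by decide) (by decide)
  have z_24 : af (![1,4,0,3,0,4,5] : Fin 7 → Fin 7) = 0 := af_dup _ 1 5 (by decide) (by decide)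
  have z_25 : af (![1,4,0,3,1,3,5] : Fin 7 → Fin 7) = 0 := af_dup _ 0 4 (by decide) (by decide)
  have z_26 : af (![1,4,0,3,2,3,4] : Fin 7 → Fin 7) = 0 := af_dup _ 1 6 (by decide) (by decide)
  have z_27 : af (![1,4,0,3,0,3,6] : Fin 7 → Fin 7) = 0 := af_dup _ 2 4 (by decide) (by decide)
  have z_28 : af (![1,4,0,3,1,4,6] : Fin 7 → Fin 7) = 0 := af_dup _ 0 4 (by decide) (by decide)
  have z_29 : af (![1,4,0,3,3,4,5] : Fin 7 → Fin 7) = 0 := af_dup _ 1 5 (by decide) (by decide)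
  have z_30 : af (![1,4,2,5,0,1,2] : Fin 7 → Fin 7) = 0 := af_dup _ 0 5 (by decide) (by decide)
  have z_31 : af (![1,4,2,5,0,1,5] : Fin 7 → Fin 7) = 0 := af_dup _ 0 5 (by decide) (by decide)
  have z_32 : af (![1,4,2,5,0,2,4] : Fin 7 → Fin 7) = 0 := af_dup _ 1 6 (by decide) (by decide)
  have z_33 : af (![1,4,2,5,1,2,3] : Fin 7 → Fin 7) = 0 := af_dup _ 0 4 (by decide) (by decide)
  have z_34 : af (![1,4,2,5,0,4,5] : Fin 7 → Fin 7) = 0 := af_dup _ 1 5 (by decide) (by decide)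
  have z_35 : af (![1,4,2,5,1,3,5] : Fin 7 → Fin 7) = 0 := af_dup _ 0 4 (by decide) (by decide)
  have z_36 : af (![1,4,2,5,2,3,4] : Fin 7 → Fin 7) = 0 := af_dup _ 1 6 (by decide) (by decide)
  have z_37 : af (![1,4,2,5,1,4,6] : Fin 7 → Fin 7) = 0 := af_dup _ 0 4 (by decide) (by decide)
  have z_38 : af (![1,4,2,5,2,5,6] : Fin 7 → Fin 7) = 0 := af_dup _ 2 4 (by decide) (by decide)
  have z_39 : af (![1,4,2,5,3,4,5] : Fin 7 → Fin 7) = 0 := af_dup _ 1 5 (by decide) (by decide)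
  have z_40 : af (![2,5,0,3,0,1,2] : Fin 7 → Fin 7) = 0 := af_dup _ 0 6 (by decide) (by decide)
  have z_41 : af (![2,5,0,3,0,1,5] : Fin 7 → Fin 7) = 0 := af_dup _ 1 6 (by decide) (by decide)
  have z_42 : af (![2,5,0,3,0,2,4] : Fin 7 → Fin 7) = 0 := af_dup _ 0 5 (by decide) (by decide)
  have z_43 : af (![2,5,0,3,1,2,3] : Fin 7 → Fin 7) = 0 := af_dup _ 0 5 (by decide) (by decide)
  have z_44 : af (![2,5,0,3,0,4,5] : Fin 7 → Fin 7) = 0 := af_dup _ 1 6 (by decide) (by decide)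
  have z_45 : af (![2,5,0,3,1,3,5] : Fin 7 → Fin 7) = 0 := af_dup _ 1 6 (by decide) (by decide)
  have z_46 : af (![2,5,0,3,2,3,4] : Fin 7 → Fin 7) = 0 := af_dup _ 0 4 (by decide) (by decide)
  have z_47 : af (![2,5,0,3,0,3,6] : Fin 7 → Fin 7) = 0 := af_dup _ 2 4 (by decide) (by decide)
  have z_48 : af (![2,5,0,3,2,5,6] : Fin 7 → Fin 7) = 0 := af_dup _ 0 4 (by decide) (by decide)
  have z_49 : af (![2,5,0,3,3,4,5] : Fin 7 → Fin 7) = 0 := af_dup _ 1 6 (by decide) (by decide)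
  have z_50 : af (![2,5,1,4,0,1,2] : Fin 7 → Fin 7) = 0 := af_dup _ 0 6 (by decide) (by decide)
  have z_51 : af (![2,5,1,4,0,1,5] : Fin 7 → Fin 7) = 0 := af_dup _ 1 6 (by decide) (by decide)
  have z_52 : af (![2,5,1,4,0,2,4] : Fin 7 → Fin 7) = 0 := af_dup _ 0 5 (by decide) (by decide)
  have z_53 : af (![2,5,1,4,1,2,3] : Fin 7 → Fin 7) = 0 := af_dup _ 0 5 (by decide) (by decide)
  have z_54 : af (![2,5,1,4,0,4,5] : Fin 7 → Fin 7) = 0 := af_dup _ 1 6 (by decide) (by decide)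
  have z_55 : af (![2,5,1,4,1,3,5] : Fin 7 → Fin 7) = 0 := af_dup _ 1 6 (by decide) (by decide)
  have z_56 : af (![2,5,1,4,2,3,4] : Fin 7 → Fin 7) = 0 := af_dup _ 0 4 (by decide) (by decide)
  have z_57 : af (![2,5,1,4,1,4,6] : Fin 7 → Fin 7) = 0 := af_dup _ 2 4 (by decide) (by decide)
  have z_58 : af (![2,5,1,4,2,5,6] : Fin 7 → Fin 7) = 0 := af_dup _ 0 4 (by decide) (by decide)
  have z_59 : af (![2,5,1,4,3,4,5] : Fin 7 → Fin 7) = 0 := af_dup _ 1 6 (by decide) (by decide)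
  have p_0 : af (![0,3,1,4,2,5,6] : Fin 7 → Fin 7) = (-1 : ℝ) • af id := by
    have e : (![0,3,1,4,2,5,6] : Fin 7 → Fin 7) = id ∘ ⇑(⟨![0,3,1,4,2,5,6], ![0,2,4,1,3,5,6], by decide, by decide⟩ : Equiv.Perm (Fin 7)) := rfl
    rw [e, af_comp_perm]
    norm_num [show Equiv.Perm.sign (⟨![0,3,1,4,2,5,6], ![0,2,4,1,3,5,6], by decide, by decide⟩ : Equiv.Perm (Fin 7)) = -1 from by decide]
  have p_1 : af (![0,3,2,5,1,4,6] : Fin 7 → Fin 7) = (-1 : ℝ) • af id := by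
    have e : (![0,3,2,5,1,4,6] : Fin 7 → Fin 7) = id ∘ ⇑(⟨![0,3,2,5,1,4,6], ![0,4,2,1,5,3,6], by decide, by decide⟩ : Equiv.Perm (Fin 7)) := rfl
    rw [e, af_comp_perm]
    norm_num [show Equiv.Perm.sign (⟨![0,3,2,5,1,4,6], ![0,4,2,1,5,3,6], by decide, by decide⟩ : Equiv.Perm (Fin 7)) = -1 from by decide]
  have p_2 : af (![1,4,0,3,2,5,6] : Fin 7 → Fin 7) = (-1 : ℝ) • af id := by
    have e : (![1,4,0,3,2,5,6] : Fin 7 → Fin 7) = id ∘ ⇑(⟨![1,4,0,3,2,5,6], ![2,0,4,3,1,5,6], by decide, by decide⟩ : Equiv.Perm (Fin 7)) := rfl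
    rw [e, af_comp_perm]
    norm_num [show Equiv.Perm.sign (⟨![1,4,0,3,2,5,6], ![2,0,4,3,1,5,6], by decide, by decide⟩ : Equiv.Perm (Fin 7)) = -1 from by decide]
  have p_3 : af (![1,4,2,5,0,3,6] : Fin 7 → Fin 7) = (-1 : ℝ) • af id := by
    have e : (![1,4,2,5,0,3,6] : Fin 7 → Fin 7) = id ∘ ⇑(⟨![1,4,2,5,0,3,6], ![4,0,2,5,1,3,6], by decide, by decide⟩ : Equiv.Perm (Fin 7)) := rfl
    rw [e, af_comp_perm]
    norm_num [show Equiv.Perm.sign (⟨![1,4,2,5,0,3,6], ![4,0,2,5,1,3,6], by decide, by decide⟩ : Equiv.Perm (Fin 7)) = -1 from by decide]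
  have p_4 : af (![2,5,0,3,1,4,6] : Fin 7 → Fin 7) = (-1 : ℝ) • af id := by
    have e : (![2,5,0,3,1,4,6] : Fin 7 → Fin 7) = id ∘ ⇑(⟨![2,5,0,3,1,4,6], ![2,4,0,3,5,1,6], by decide, by decide⟩ : Equiv.Perm (Fin 7)) := rfl
    rw [e, af_comp_perm]
    norm_num [show Equiv.Perm.sign (⟨![2,5,0,3,1,4,6], ![2,4,0,3,5,1,6], by decide, by decide⟩ : Equiv.Perm (Fin 7)) = -1 from by decide]
  have p_5 : af (![2,5,1,4,0,3,6] : Fin 7 → Fin 7) = (-1 : ℝ) • af id := by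
    have e : (![2,5,1,4,0,3,6] : Fin 7 → Fin 7) = id ∘ ⇑(⟨![2,5,1,4,0,3,6], ![4,2,0,5,3,1,6], by decide, by decide⟩ : Equiv.Perm (Fin 7)) := rfl
    rw [e, af_comp_perm]
    norm_num [show Equiv.Perm.sign (⟨![2,5,1,4,0,3,6], ![4,2,0,5,3,1,6], by decide, by decide⟩ : Equiv.Perm (Fin 7)) = -1 from by decide]
  have key : G2vol (bV 7) φ = (-(6 * a₄ ^ 3)) • vol7 := by
    have hG : G2vol (bV 7) φ = wedge (wedge (iprod (bV 7) φ) (iprod (bV 7) φ)) φ := rfl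
    rw [hG, hψ, hφ, vol7_eq]
    simp only [wedge_add_left, wedge_add_right, wedge_sub_left, wedge_sub_right,
      wedge_smul_left, wedge_smul_right, wedge_af, app22, app43,
      z4_0, z4_1, z4_2, z_0, z_1, z_2, z_3, z_4, z_5, z_6, z_7, z_8, z_9, z_10, z_11, z_12, z_13, z_14, z_15, z_16, z_17, z_18, z_19, z_20, z_21, z_22, z_23, z_24, z_25, z_26, z_27, z_28, z_29, z_30, z_31, z_32, z_33, z_34, z_35, z_36, z_37, z_38, z_39, z_40, z_41, z_42, z_43, z_44, z_45, z_46, z_47, z_48, z_49, z_50, z_51, z_52, z_53, z_54, z_55, z_56, z_57, z_58, z_59, p_0, p_1, p_2, p_3, p_4, p_5,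
      smul_zero, zero_add, add_zero, wedge_zero_left, wedge_zero_right,
      zero_sub, sub_zero, neg_zero, smul_neg]
    module
  refine ⟨key, fun ha4 hdef => ?_⟩
  have hb : (bV 7 : V7) ≠ 0 := by
    intro h
    simpa [bV, Pi.single_apply] using congrFun h ((7 - 1 : ℕ) : Fin 7)
  exact hdef (bV 7) hb (by rw [key, ha4]; norm_num)
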